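/- Fix constants 0 < μ₁ < μ₂. Then there exist C′ > 0 and T₀ > 0 such that for every t ≥ T₀ and every r with (t,r) ∈ Ω_c and μ₁ ≤ (r−r₁)/t ≤ μ₂ one has |λ_c(t,r) − λ₀ − (r−r₁)²/(2t²)| ≤ C′·t^{−(1+ε)/2}. (This is the asymptotic expansion of the stationary point λ_c derived from (4.16) in the proof of the paper's Theorem 2.11.) -/

import Mathlib

set_option maxHeartbeats 1000000

open MeasureTheory

lemma sqrt_inv_diff_bound (d a b : ℝ) (hd : 0 < d) (ha : d ≤ a) (hb : d ≤ b) :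
    |1 / Real.sqrt a - 1 / Real.sqrt b| ≤ |b - a| / (d * Real.sqrt d) := by
  have h0a : 0 < a := hd.trans_le ha
  have h0b : 0 < b := hd.trans_le hb
  have sa : 0 < Real.sqrt a := Real.sqrt_pos.2 h0a
  have sb : 0 < Real.sqrt b := Real.sqrt_pos.2 h0b
  have sd : 0 < Real.sqrt d := Real.sqrt_pos.2 hd
  have hsa : Real.sqrt d ≤ Real.sqrt a := Real.sqrt_le_sqrt ha
  have hsb : Real.sqrt d ≤ Real.sqrt b := Real.sqrt_le_sqrt hb
  have ha2 : Real.sqrt a ^ 2 = a := Real.sq_sqrt h0a.le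
  have hb2 : Real.sqrt b ^ 2 = b := Real.sq_sqrt h0b.le
  have hden : (0:ℝ) < Real.sqrt a * Real.sqrt b * (Real.sqrt b + Real.sqrt a) := by positivity
  have key : 1 / Real.sqrt a - 1 / Real.sqrt b
      = (b - a) / (Real.sqrt a * Real.sqrt b * (Real.sqrt b + Real.sqrt a)) := by
    rw [div_sub_div _ _ sa.ne' sb.ne', div_eq_div_iff (by positivity) hden.ne']
    nlinarith [ha2, hb2]
  rw [key, abs_div, abs_of_pos hden]
  apply div_le_div_of_nonneg_left (abs_nonneg _) (by positivity)
  calc d * Real.sqrt d ≤ (Real.sqrt a * Real.sqrt b) * Real.sqrt d := by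
        have h1 : d ≤ Real.sqrt a * Real.sqrt b := by nlinarith
        nlinarith
    _ ≤ Real.sqrt a * Real.sqrt b * (Real.sqrt b + Real.sqrt a) := by nlinarith

/-- Asymptotic expansion of the stationary point `λ_c` in the
Dollard regime (from (4.16) in the proof of the paper's Theorem 2.11): for fixed
`0 < μ₁ < μ₂` there are `C′ > 0` and `T₀ > 0` such that for all `t ≥ T₀` and all
`r` with `(t,r) ∈ Ω_c` and `μ₁ ≤ (r−r₁)/t ≤ μ₂`,
`|λ_c(t,r) − λ₀ − (r−r₁)²/(2t²)| ≤ C′·t^{−(1+ε)/2}`. -/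
theorem dollard_stationary_point_asymptotics
    (lam0 lam1 r1 c1 c2 m C ε : ℝ)
    (hlam : lam0 < lam1) (hr1 : 1 ≤ r1) (hc1 : 0 < c1) (hc12 : c1 ≤ c2)
    (hm : m ≤ (lam0 + lam1) / 2)
    (hC : 0 < C) (hε : 0 < ε) (hε1 : ε < 1)
    (w q : ℝ → ℝ)
    (hw : ContinuousOn w (Set.Ici r1))
    (hwl : ∀ s, r1 ≤ s → c1 ≤ w s) (hwu : ∀ s, r1 ≤ s → w s ≤ c2)
    (hw1 : ∀ s, r1 ≤ s → w s = 1)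
    (hq : ContinuousOn q (Set.Ici r1))
    (hql : ∀ s, r1 ≤ s → m ≤ q s) (hqu : ∀ s, r1 ≤ s → q s ≤ (lam0 + lam1) / 2)
    (hqd : ∀ s, r1 ≤ s → |q s - lam0| ≤ C * s ^ (-(1 + ε) / 2))
    (T : ℝ → ℝ → ℝ)
    (hT : ∀ lam r, T lam r = ∫ s in r1..r, w s / Real.sqrt (2 * (lam - q s)))
    (Ωc : Set (ℝ × ℝ))
    (hΩc : Ωc = {p : ℝ × ℝ | 0 < p.1 ∧ r1 < p.2 ∧ p.1 < T lam1 p.2})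
    (lamc : ℝ → ℝ → ℝ)
    (hlamc : ∀ p ∈ Ωc, lam1 < lamc p.1 p.2 ∧ T (lamc p.1 p.2) p.2 = p.1)
    (μ1 μ2 : ℝ) (hμ1 : 0 < μ1) (hμ12 : μ1 < μ2) :
    ∃ C' > 0, ∃ T0 > 0, ∀ t : ℝ, T0 ≤ t → ∀ r : ℝ, (t, r) ∈ Ωc →
      μ1 ≤ (r - r1) / t → (r - r1) / t ≤ μ2 →
      |lamc t r - lam0 - (r - r1) ^ 2 / (2 * t ^ 2)|
        ≤ C' * t ^ (-(1 + ε) / 2) := by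
  have hd : 0 < lam1 - lam0 := sub_pos.2 hlam
  set d : ℝ := lam1 - lam0 with hdT
  have hsd : 0 < Real.sqrt d := Real.sqrt_pos.2 hd
  have hμ2 : 0 < μ2 := hμ1.trans hμ12
  have hε1' : (0:ℝ) < 1 - ε := by linarith
  set K1 : ℝ := 2 * C / (d * Real.sqrt d) with hK1
  have hK1pos : 0 < K1 := by positivity
  set K2 : ℝ := K1 * (2 / (1 - ε)) * (1 + μ2) ^ ((1 - ε) / 2) with hK2
  have hK2pos : 0 < K2 := by positivity
  refine ⟨5 * μ2 ^ 2 * K2, by positivity,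
    max (max r1 1) ((2 * K2) ^ ((2:ℝ) / (1 + ε))), ?_, ?_⟩
  · exact lt_of_lt_of_le one_pos ((le_max_right r1 1).trans (le_max_left _ _))
  intro t ht r hmem hμa hμb
  have hmem' := hmem
  rw [hΩc] at hmem'
  obtain ⟨ht0, hr1r, -⟩ := hmem'
  obtain ⟨hlamgt, hTt⟩ := hlamc (t, r) hmem
  simp only at ht0 hr1r hlamgt hTt
  set lam := lamc t r with hlamdef
  have ht1 : (1:ℝ) ≤ t := le_trans ((le_max_right r1 1).trans (le_max_left _ _)) ht
  have htr1 : r1 ≤ t := le_trans ((le_max_left r1 1).trans (le_max_left _ _)) ht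
  have htc : (2 * K2) ^ ((2:ℝ) / (1 + ε)) ≤ t := le_trans (le_max_right _ _) ht
  have hrr : r1 ≤ r := hr1r.le
  have hr0 : (0:ℝ) < r := by linarith
  -- basic positivity for 2*(lam - q s) and 2*(lam - lam0)
  have hqd2 : ∀ s, r1 ≤ s → d ≤ 2 * (lam - q s) := by
    intro s hs
    have := hqu s hs
    simp only [hdT]; linarith
  have hb2 : d ≤ 2 * (lam - lam0) := by simp only [hdT]; linarith
  have h2x : (0:ℝ) < 2 * (lam - lam0) := lt_of_lt_of_le hd hb2
  set sx : ℝ := Real.sqrt (2 * (lam - lam0)) with hsx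
  have hsxpos : 0 < sx := Real.sqrt_pos.2 h2x
  set cst : ℝ := 1 / sx with hcst
  -- Step 1 : t as an integral
  have hT1 : (∫ s in r1..r, 1 / Real.sqrt (2 * (lam - q s))) = t := by
    rw [← hTt, hT]
    apply intervalIntegral.integral_congr
    intro s hs
    rw [Set.uIcc_of_le hrr] at hs
    simp [hw1 s hs.1]
  -- continuity / integrability
  have hmemIcc : ∀ s ∈ Set.uIcc r1 r, r1 ≤ s := by
    intro s hs; rw [Set.uIcc_of_le hrr] at hs; exact hs.1
  have hqc : ContinuousOn q (Set.uIcc r1 r) :=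
    hq.mono (fun s hs => hmemIcc s hs)
  have hfc : ContinuousOn (fun s => 1 / Real.sqrt (2 * (lam - q s))) (Set.uIcc r1 r) := by
    apply ContinuousOn.div continuousOn_const
    · exact Real.continuous_sqrt.comp_continuousOn
        (continuousOn_const.mul (continuousOn_const.sub hqc))
    · intro s hs
      exact (Real.sqrt_pos.2 (lt_of_lt_of_le hd (hqd2 s (hmemIcc s hs)))).ne'
  have hIf : IntervalIntegrable (fun s => 1 / Real.sqrt (2 * (lam - q s))) volume r1 r :=
    hfc.intervalIntegrable
  have hpc : ContinuousOn (fun s : ℝ => s ^ (-(1 + ε) / 2)) (Set.uIcc r1 r) := by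
    intro s hs
    have hs1 : r1 ≤ s := hmemIcc s hs
    exact (Real.continuousAt_rpow_const s _ (Or.inl (by linarith))).continuousWithinAt
  have hIp : IntervalIntegrable (fun s : ℝ => K1 * s ^ (-(1 + ε) / 2)) volume r1 r :=
    (hpc.intervalIntegrable).const_mul K1
  -- pointwise bound
  have hbound : ∀ s ∈ Set.uIcc r1 r,
      |1 / Real.sqrt (2 * (lam - q s)) - cst| ≤ K1 * s ^ (-(1 + ε) / 2) := by
    intro s hs
    have hs1 : r1 ≤ s := hmemIcc s hs
    have h1 : d ≤ 2 * (lam - q s) := hqd2 s hs1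
    have key := sqrt_inv_diff_bound d (2 * (lam - q s)) (2 * (lam - lam0)) hd h1 hb2
    rw [hcst, hsx]
    refine key.trans ?_
    have habs : |2 * (lam - lam0) - 2 * (lam - q s)| = 2 * |q s - lam0| := by
      rw [show 2 * (lam - lam0) - 2 * (lam - q s) = 2 * (q s - lam0) by ring,
        abs_mul, abs_of_pos (by norm_num : (0:ℝ) < 2)]
    rw [habs]
    have hq1 := hqd s hs1
    have hsp : (0:ℝ) ≤ s ^ (-(1 + ε) / 2) := Real.rpow_nonneg (by linarith) _
    rw [hK1, div_mul_eq_mul_div]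
    apply div_le_div_of_nonneg_right ?_ (by positivity)
    linarith
  -- integral bound
  have hsub : (∫ s in r1..r, (1 / Real.sqrt (2 * (lam - q s)) - cst)) = t - (r - r1) * cst := by
    rw [intervalIntegral.integral_sub hIf (intervalIntegrable_const), hT1,
      intervalIntegral.integral_const, smul_eq_mul]
  have hE1 : |t - (r - r1) * cst| ≤ K1 * ((r ^ ((1 - ε) / 2) - r1 ^ ((1 - ε) / 2)) / ((1 - ε) / 2)) := by
    rw [← hsub, ← Real.norm_eq_abs]
    have step := intervalIntegral.norm_integral_le_abs_of_norm_le
      (μ := volume) (f := fun s => 1 / Real.sqrt (2 * (lam - q s)) - cst)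
      (g := fun s : ℝ => K1 * s ^ (-(1 + ε) / 2)) (a := r1) (b := r)
      ?_ hIp
    · refine step.trans ?_
      rw [intervalIntegral.integral_const_mul, integral_rpow (Or.inl (by linarith)),
        show (-(1 + ε) / 2 + 1) = (1 - ε) / 2 by ring]
      have hnum : r1 ^ ((1 - ε) / 2) ≤ r ^ ((1 - ε) / 2) :=
        Real.rpow_le_rpow (by linarith) hrr (by positivity)
      rw [abs_of_nonneg (mul_nonneg hK1pos.le
        (div_nonneg (sub_nonneg.2 hnum) (by positivity)))]
    · filter_upwards [ae_restrict_mem measurableSet_uIoc] with s hs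
      rw [Real.norm_eq_abs]
      exact hbound s (Set.uIoc_subset_uIcc hs)
  -- bound r powers by t powers
  have hAle : r - r1 ≤ μ2 * t := by
    have := (div_le_iff₀ ht0).1 hμb; linarith
  have hrle : r ≤ (1 + μ2) * t := by linarith
  have hrp : r ^ ((1 - ε) / 2) ≤ (1 + μ2) ^ ((1 - ε) / 2) * t ^ ((1 - ε) / 2) := by
    rw [← Real.mul_rpow (by positivity) ht0.le]
    exact Real.rpow_le_rpow hr0.le hrle (by positivity)
  have hE : |t - (r - r1) * cst| ≤ K2 * t ^ ((1 - ε) / 2) := by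
    refine hE1.trans ?_
    rw [hK2]
    have h1 : (r ^ ((1 - ε) / 2) - r1 ^ ((1 - ε) / 2)) / ((1 - ε) / 2)
        ≤ (2 / (1 - ε)) * ((1 + μ2) ^ ((1 - ε) / 2) * t ^ ((1 - ε) / 2)) := by
      rw [div_le_iff₀ (by positivity : (0:ℝ) < (1 - ε) / 2)]
      have hr1p : (0:ℝ) ≤ r1 ^ ((1 - ε) / 2) := Real.rpow_nonneg (by linarith) _
      have h2 : 2 / (1 - ε) * ((1 + μ2) ^ ((1 - ε) / 2) * t ^ ((1 - ε) / 2)) * ((1 - ε) / 2)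
          = (1 + μ2) ^ ((1 - ε) / 2) * t ^ ((1 - ε) / 2) := by
        field_simp
      linarith [hrp, hr1p]
    calc K1 * ((r ^ ((1 - ε) / 2) - r1 ^ ((1 - ε) / 2)) / ((1 - ε) / 2))
        ≤ K1 * ((2 / (1 - ε)) * ((1 + μ2) ^ ((1 - ε) / 2) * t ^ ((1 - ε) / 2))) := by
          exact mul_le_mul_of_nonneg_left h1 hK1pos.le
      _ = K1 * (2 / (1 - ε)) * (1 + μ2) ^ ((1 - ε) / 2) * t ^ ((1 - ε) / 2) := by ring
  -- |E| ≤ t/2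
  have htK : 2 * K2 ≤ t ^ ((1 + ε) / 2) := by
    have h2K : (0:ℝ) ≤ 2 * K2 := by positivity
    have step := Real.rpow_le_rpow (by positivity) htc (by positivity : (0:ℝ) ≤ (1 + ε) / 2)
    rw [← Real.rpow_mul h2K] at step
    rwa [show (2:ℝ) / (1 + ε) * ((1 + ε) / 2) = 1 by field_simp, Real.rpow_one] at step
  have hts : t = t ^ ((1 + ε) / 2) * t ^ ((1 - ε) / 2) := by
    rw [← Real.rpow_add ht0, show ((1 + ε) / 2 + (1 - ε) / 2 : ℝ) = 1 by ring, Real.rpow_one]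
  have htp0 : (0:ℝ) ≤ t ^ ((1 - ε) / 2) := Real.rpow_nonneg ht0.le _
  have hEhalf : K2 * t ^ ((1 - ε) / 2) ≤ t / 2 := by
    have hprod : 2 * K2 * t ^ ((1 - ε) / 2) ≤ t ^ ((1 + ε) / 2) * t ^ ((1 - ε) / 2) :=
      mul_le_mul_of_nonneg_right htK htp0
    linarith [hts, hprod]
  -- algebra
  set A : ℝ := r - r1 with hA
  have hA0 : 0 < A := sub_pos.2 hr1r
  set u : ℝ := A * cst with hu
  set E : ℝ := t - u with hEdef
  have hEabs : |E| ≤ K2 * t ^ ((1 - ε) / 2) := hE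
  have hEhalf' : |E| ≤ t / 2 := hEabs.trans hEhalf
  have hut : t / 2 ≤ u := by
    have := abs_le.1 hEhalf'
    simp only [hEdef] at this
    linarith [this.2]
  have hupos : 0 < u := lt_of_lt_of_le (by linarith) hut
  have hsx2 : sx ^ 2 = 2 * (lam - lam0) := Real.sq_sqrt h2x.le
  have huA : u * sx = A := by
    rw [hu, hcst]; field_simp
  have hxu : lam - lam0 = A ^ 2 / (2 * u ^ 2) := by
    have hA2 : A ^ 2 = u ^ 2 * (2 * (lam - lam0)) := by rw [← huA, mul_pow, hsx2]
    rw [hA2]; field_simp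
  have hdiff : lam - lam0 - A ^ 2 / (2 * t ^ 2)
      = A ^ 2 * (E * (2 * t - E)) / (2 * u ^ 2 * t ^ 2) := by
    rw [hxu, hEdef]
    field_simp
    ring
  have hden2 : (0:ℝ) < 2 * u ^ 2 * t ^ 2 := by positivity
  have habs2 : |lam - lam0 - A ^ 2 / (2 * t ^ 2)|
      ≤ A ^ 2 * (|E| * (2 * t + |E|)) / (2 * u ^ 2 * t ^ 2) := by
    rw [hdiff, abs_div, abs_of_pos hden2, abs_mul, abs_mul]
    rw [abs_of_nonneg (by positivity : (0:ℝ) ≤ A ^ 2)]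
    apply div_le_div_of_nonneg_right ?_ hden2.le
    apply mul_le_mul_of_nonneg_left ?_ (by positivity : (0:ℝ) ≤ A ^ 2)
    apply mul_le_mul_of_nonneg_left ?_ (abs_nonneg E)
    have h2tE : |2 * t - E| ≤ |2 * t| + |E| := by
      rw [sub_eq_add_neg]
      exact (abs_add_le _ _).trans_eq (by rw [abs_neg])
    calc |2 * t - E| ≤ |2 * t| + |E| := h2tE
      _ = 2 * t + |E| := by rw [abs_of_pos (by linarith : (0:ℝ) < 2 * t)]
  have hstep : A ^ 2 * (|E| * (2 * t + |E|)) / (2 * u ^ 2 * t ^ 2)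
      ≤ (μ2 ^ 2 * t ^ 2) * (|E| * (5 * t / 2)) / (2 * (t / 2) ^ 2 * t ^ 2) := by
    apply div_le_div₀ (by positivity) ?_ (by positivity) ?_
    · have hA2 : A ^ 2 ≤ μ2 ^ 2 * t ^ 2 := by
        calc A ^ 2 = A * A := sq A
          _ ≤ (μ2 * t) * (μ2 * t) := mul_le_mul hAle hAle hA0.le (by positivity)
          _ = μ2 ^ 2 * t ^ 2 := by ring
      have h2 : |E| * (2 * t + |E|) ≤ |E| * (5 * t / 2) := by
        apply mul_le_mul_of_nonneg_left ?_ (abs_nonneg _)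
        linarith
      exact mul_le_mul hA2 h2 (by positivity) (by positivity)
    · have h3 : (t / 2) ^ 2 ≤ u ^ 2 := pow_le_pow_left₀ (by positivity) hut 2
      exact mul_le_mul_of_nonneg_right (by linarith : 2 * (t / 2) ^ 2 ≤ 2 * u ^ 2) (sq_nonneg t)
  have heq : (μ2 ^ 2 * t ^ 2) * (|E| * (5 * t / 2)) / (2 * (t / 2) ^ 2 * t ^ 2)
      = 5 * μ2 ^ 2 * |E| / t := by
    field_simp
  have hfinal : 5 * μ2 ^ 2 * |E| / t ≤ 5 * μ2 ^ 2 * K2 * t ^ (-(1 + ε) / 2) := by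
    have hps : t ^ (-(1 + ε) / 2) = t ^ ((1 - ε) / 2) / t := by
      rw [show (-(1 + ε) / 2 : ℝ) = (1 - ε) / 2 - 1 by ring, Real.rpow_sub ht0, Real.rpow_one]
    have h9 : 5 * μ2 ^ 2 * |E| ≤ 5 * μ2 ^ 2 * (K2 * t ^ ((1 - ε) / 2)) :=
      mul_le_mul_of_nonneg_left hEabs (by positivity)
    calc 5 * μ2 ^ 2 * |E| / t ≤ 5 * μ2 ^ 2 * (K2 * t ^ ((1 - ε) / 2)) / t :=
          (div_le_div_iff_of_pos_right ht0).2 h9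
      _ = 5 * μ2 ^ 2 * K2 * t ^ (-(1 + ε) / 2) := by rw [hps]; ring
  calc |lam - lam0 - A ^ 2 / (2 * t ^ 2)|
      ≤ A ^ 2 * (|E| * (2 * t + |E|)) / (2 * u ^ 2 * t ^ 2) := habs2
    _ ≤ (μ2 ^ 2 * t ^ 2) * (|E| * (5 * t / 2)) / (2 * (t / 2) ^ 2 * t ^ 2) := hstep
    _ = 5 * μ2 ^ 2 * |E| / t := heq
    _ ≤ 5 * μ2 ^ 2 * K2 * t ^ (-(1 + ε) / 2) := hfinal
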